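/- Let U and V be D×D unimodular matrices, let Λ₁, …, Λ_L be D×D nonsingular diagonal integer matrices, and set moduli M_i = UΛ_iV for 1 ≤ i ≤ L. Let Λ be the diagonal integer matrix whose j-th diagonal entry is the least common multiple of Λ₁(j,j), …, Λ_L(j,j), and let R = UΛB for any unimodular matrix B, which is an lcrm of the M_i. Then every integer vector m ∈ 𝒩(R) is uniquely determined by its remainders r_i = ⟨m⟩_{M_i}, 1 ≤ i ≤ L. -/

import Mathlib

open Matrix

/-- An integer matrix is unimodular if its determinant is `1` or `-1`. -/
def Unimod {D : ℕ} (U : Matrix (Fin D) (Fin D) ℤ) : Prop := U.det = 1 ∨ U.det = -1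

/-- `C` is a common right multiple (crm) of the family `M`. -/
def IsCRM {D n : ℕ} (M : Fin n → Matrix (Fin D) (Fin D) ℤ)
    (C : Matrix (Fin D) (Fin D) ℤ) : Prop :=
  C.det ≠ 0 ∧ ∀ i, ∃ Q : Matrix (Fin D) (Fin D) ℤ, C = M i * Q

/-- `C` is a least common right multiple (lcrm) of the family `M`. -/
def IsLCRM {D n : ℕ} (M : Fin n → Matrix (Fin D) (Fin D) ℤ)
    (C : Matrix (Fin D) (Fin D) ℤ) : Prop :=
  IsCRM M C ∧ ∀ C', IsCRM M C' → ∃ P : Matrix (Fin D) (Fin D) ℤ, C' = C * P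

/-- `C` is a common left multiple (clm) of the family `M`. -/
def IsCLM {D n : ℕ} (M : Fin n → Matrix (Fin D) (Fin D) ℤ)
    (C : Matrix (Fin D) (Fin D) ℤ) : Prop :=
  C.det ≠ 0 ∧ ∀ i, ∃ Q : Matrix (Fin D) (Fin D) ℤ, C = Q * M i

/-- `C` is a least common left multiple (lclm) of the family `M`. -/
def IsLCLM {D n : ℕ} (M : Fin n → Matrix (Fin D) (Fin D) ℤ)
    (C : Matrix (Fin D) (Fin D) ℤ) : Prop :=
  IsCLM M C ∧ ∀ C', IsCLM M C' → ∃ P : Matrix (Fin D) (Fin D) ℤ, C' = P * C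

/-- `B` is a common left divisor (cld) of the family `M`. -/
def IsCLD {D n : ℕ} (M : Fin n → Matrix (Fin D) (Fin D) ℤ)
    (B : Matrix (Fin D) (Fin D) ℤ) : Prop :=
  B.det ≠ 0 ∧ ∀ i, ∃ K : Matrix (Fin D) (Fin D) ℤ, M i = B * K

/-- `B` is a greatest common left divisor (gcld) of the family `M`:
`B` is a cld, and every cld of the family is a left divisor of `B`. -/
def IsGCLD {D n : ℕ} (M : Fin n → Matrix (Fin D) (Fin D) ℤ)
    (B : Matrix (Fin D) (Fin D) ℤ) : Prop :=
  IsCLD M B ∧ ∀ B', IsCLD M B' → ∃ K : Matrix (Fin D) (Fin D) ℤ, B = B' * K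

/-- `A` and `B` are left coprime: every (nonsingular) common left divisor is unimodular. -/
def LeftCoprime {D : ℕ} (A B : Matrix (Fin D) (Fin D) ℤ) : Prop :=
  ∀ C : Matrix (Fin D) (Fin D) ℤ, C.det ≠ 0 →
    (∃ K, A = C * K) → (∃ K, B = C * K) → Unimod C

/-- `A` and `B` are right coprime: every (nonsingular) common right divisor is unimodular. -/
def RightCoprime {D : ℕ} (A B : Matrix (Fin D) (Fin D) ℤ) : Prop :=
  ∀ C : Matrix (Fin D) (Fin D) ℤ, C.det ≠ 0 →
    (∃ K, A = K * C) → (∃ K, B = K * C) → Unimod C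

/-- `A` and `B` are coprime (for commuting matrices left and right coprimeness coincide). -/
def MatCoprime {D : ℕ} (A B : Matrix (Fin D) (Fin D) ℤ) : Prop :=
  LeftCoprime A B ∧ RightCoprime A B

/-- The lattice generated by an integer matrix `M`: all integer combinations `M n`. -/
def LAT {D : ℕ} (M : Matrix (Fin D) (Fin D) ℤ) : Set (Fin D → ℤ) :=
  {v | ∃ n : Fin D → ℤ, v = M.mulVec n}

/-- `𝒩(M)`: the integer vectors of the form `M x` with `x ∈ [0,1)^D`. -/
def NSet {D : ℕ} (M : Matrix (Fin D) (Fin D) ℤ) : Set (Fin D → ℤ) :=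
  {k | ∃ x : Fin D → ℚ, (∀ j, 0 ≤ x j ∧ x j < 1) ∧
      (M.map (Int.cast : ℤ → ℚ)).mulVec x = fun j => (k j : ℚ)}

/-- `r` is the remainder of `m` modulo `M`: `r ∈ 𝒩(M)` and `m − r ∈ LAT(M)`. -/
def IsRem {D : ℕ} (M : Matrix (Fin D) (Fin D) ℤ) (m r : Fin D → ℤ) : Prop :=
  r ∈ NSet M ∧ (m - r) ∈ LAT M

/-- The Euclidean norm on `ℝ^D`. -/
noncomputable def euclNorm {D : ℕ} (v : Fin D → ℝ) : ℝ := Real.sqrt (∑ j, (v j) ^ 2)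

/-- The lattice generated by a real matrix `M`: all integer combinations `M n`. -/
def LATR {D : ℕ} (M : Matrix (Fin D) (Fin D) ℝ) : Set (Fin D → ℝ) :=
  {v | ∃ n : Fin D → ℤ, v = M.mulVec (fun j => (n j : ℝ))}

lemma unimod_inv {D : ℕ} {U : Matrix (Fin D) (Fin D) ℤ} (hU : Unimod U) :
    ∃ W : Matrix (Fin D) (Fin D) ℤ, U * W = 1 ∧ W * U = 1 := by
  have hdet : IsUnit U.det := by
    rcases hU with h | h <;> simp [h, Int.isUnit_iff]
  have hu : IsUnit U := (Matrix.isUnit_iff_isUnit_det U).mpr hdet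
  rcases hu with ⟨u, rfl⟩
  exact ⟨↑u⁻¹, u.mul_inv, u.inv_mul⟩

lemma unimod_det_ne_zero {D : ℕ} {U : Matrix (Fin D) (Fin D) ℤ} (hU : Unimod U) :
    U.det ≠ 0 := by rcases hU with h | h <;> simp [h]

/-- moduli `Mᵢ = UΛᵢV`; `R = UΛB` (Λ the diagonal of columnwise lcm's)
is an lcrm of the moduli, and every `m ∈ 𝒩(R)` is uniquely determined by its
remainders. -/
theorem stmt12 {D L : ℕ} (hL : 1 ≤ L)
    (U V : Matrix (Fin D) (Fin D) ℤ) (hU : Unimod U) (hV : Unimod V)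
    (d : Fin L → Fin D → ℤ) (hd : ∀ i j, d i j ≠ 0)
    (B : Matrix (Fin D) (Fin D) ℤ) (hB : Unimod B)
    (R : Matrix (Fin D) (Fin D) ℤ)
    (hR : R = U * Matrix.diagonal (fun j => Finset.univ.lcm (fun i => d i j)) * B) :
    IsLCRM (fun i => U * Matrix.diagonal (d i) * V) R ∧
      ∀ (m m' : Fin D → ℤ) (r : Fin L → Fin D → ℤ),
        m ∈ NSet R → m' ∈ NSet R →
        (∀ i, IsRem (U * Matrix.diagonal (d i) * V) m (r i)) →
        (∀ i, IsRem (U * Matrix.diagonal (d i) * V) m' (r i)) → m = m' := by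
  set l : Fin D → ℤ := fun j => Finset.univ.lcm (fun i => d i j) with hl_def
  have hl : ∀ j, l j ≠ 0 := by
    intro j h
    rw [Finset.lcm_eq_zero_iff] at h
    obtain ⟨i, -, hi⟩ := h
    exact hd i j (by simpa using hi)
  have hdvd : ∀ i j, d i j ∣ l j := fun i j => Finset.dvd_lcm (Finset.mem_univ i)
  obtain ⟨Wu, hUWu, hWuU⟩ := unimod_inv hU
  obtain ⟨Wv, hVWv, hWvV⟩ := unimod_inv hV
  obtain ⟨Wb, hBWb, hWbB⟩ := unimod_inv hB
  have hdetR : R.det ≠ 0 := by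
    rw [hR, Matrix.det_mul, Matrix.det_mul, Matrix.det_diagonal]
    exact mul_ne_zero (mul_ne_zero (unimod_det_ne_zero hU)
      (Finset.prod_ne_zero_iff.mpr fun j _ => hl j)) (unimod_det_ne_zero hB)
  -- CRM
  have hcrm : IsCRM (fun i => U * Matrix.diagonal (d i) * V) R := by
    refine ⟨hdetR, fun i => ⟨Wv * (Matrix.diagonal (fun j => l j / d i j) * B), ?_⟩⟩
    show R = U * Matrix.diagonal (d i) * V * (Wv * (Matrix.diagonal (fun j => l j / d i j) * B))
    rw [hR]
    simp only [Matrix.mul_assoc]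
    have h1 : V * (Wv * (Matrix.diagonal (fun j => l j / d i j) * B))
        = Matrix.diagonal (fun j => l j / d i j) * B := by
      rw [← Matrix.mul_assoc, hVWv, Matrix.one_mul]
    rw [h1, ← Matrix.mul_assoc (Matrix.diagonal (d i)), Matrix.diagonal_mul_diagonal,
      show (fun j => d i j * (l j / d i j)) = l from funext fun j => Int.mul_ediv_cancel' (hdvd i j)]
  -- LCRM
  have hlcrm : IsLCRM (fun i => U * Matrix.diagonal (d i) * V) R := by
    refine ⟨hcrm, fun C' hC' => ?_⟩
    set W : Matrix (Fin D) (Fin D) ℤ := Wu * C' with hW_def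
    have hWdvd : ∀ j k, l j ∣ W j k := by
      intro j k
      refine Finset.lcm_dvd fun i _ => ?_
      obtain ⟨Q, hQ⟩ := hC'.2 i
      have : W = Matrix.diagonal (d i) * (V * Q) := by
        rw [hW_def, hQ, ← Matrix.mul_assoc, ← Matrix.mul_assoc, ← Matrix.mul_assoc, hWuU,
          Matrix.one_mul, Matrix.mul_assoc]
      rw [this, Matrix.diagonal_mul]
      exact Dvd.intro _ rfl
    set E : Matrix (Fin D) (Fin D) ℤ := Matrix.of (fun j k => W j k / l j) with hE_def
    have hlE : Matrix.diagonal l * E = W := by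
      ext j k
      rw [Matrix.diagonal_mul]
      exact Int.mul_ediv_cancel' (hWdvd j k)
    refine ⟨Wb * E, ?_⟩
    rw [hR, Matrix.mul_assoc, Matrix.mul_assoc, ← Matrix.mul_assoc B, hBWb, Matrix.one_mul,
      ← Matrix.mul_assoc, Matrix.mul_assoc U, hlE, hW_def, ← Matrix.mul_assoc, hUWu,
      Matrix.one_mul]
  refine ⟨hlcrm, fun m m' r hm hm' hr hr' => ?_⟩
  -- m - m' ∈ LAT R
  have hdiff : ∃ n : Fin D → ℤ, m - m' = R.mulVec n := by
    have hw : ∀ i, ∃ u : Fin D → ℤ, m - m' = (U * Matrix.diagonal (d i) * V).mulVec u := by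
      intro i
      obtain ⟨n₁, hn₁⟩ := (hr i).2
      obtain ⟨n₂, hn₂⟩ := (hr' i).2
      refine ⟨n₁ - n₂, ?_⟩
      have : m - m' = (m - r i) - (m' - r i) := by ring
      rw [this, hn₁, hn₂, ← Matrix.mulVec_sub]
    set w : Fin D → ℤ := Wu.mulVec (m - m') with hw_def
    have hwd : ∀ j, l j ∣ w j := by
      intro j
      refine Finset.lcm_dvd fun i _ => ?_
      obtain ⟨u, hu⟩ := hw i
      have : w = (Matrix.diagonal (d i)).mulVec (V.mulVec u) := by
        rw [hw_def, hu, Matrix.mulVec_mulVec, Matrix.mulVec_mulVec, ← Matrix.mul_assoc,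
          ← Matrix.mul_assoc, hWuU, Matrix.one_mul, ← Matrix.mulVec_mulVec]
      rw [this, Matrix.mulVec_diagonal]
      exact Dvd.intro _ rfl
    set t : Fin D → ℤ := fun j => w j / l j with ht_def
    refine ⟨Wb.mulVec t, ?_⟩
    have h1 : R.mulVec (Wb.mulVec t) = (U * Matrix.diagonal l).mulVec t := by
      rw [Matrix.mulVec_mulVec, hR, Matrix.mul_assoc (U * Matrix.diagonal l), hBWb,
        Matrix.mul_one]
    have h2 : (Matrix.diagonal l).mulVec t = w := by
      funext j
      rw [Matrix.mulVec_diagonal]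
      exact Int.mul_ediv_cancel' (hwd j)
    rw [h1, ← Matrix.mulVec_mulVec, h2, hw_def, Matrix.mulVec_mulVec, hUWu, Matrix.one_mulVec]
  obtain ⟨n, hn⟩ := hdiff
  obtain ⟨x, hx01, hx⟩ := hm
  obtain ⟨x', hx'01, hx'⟩ := hm'
  set Rq : Matrix (Fin D) (Fin D) ℚ := R.map (Int.cast : ℤ → ℚ) with hRq_def
  have hdetRq : IsUnit Rq.det := by
    have hdet : Rq.det = (R.det : ℚ) := by
      exact ((Int.castRingHom ℚ).map_det R).symm
    rw [hdet]
    exact isUnit_iff_ne_zero.mpr (by exact_mod_cast hdetR)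
  have : Invertible Rq := Rq.invertibleOfIsUnitDet hdetRq
  have hinj : Function.Injective Rq.mulVec := Matrix.mulVec_injective_of_invertible Rq
  have hcast : Rq.mulVec (fun j => ((n j : ℚ))) = Rq.mulVec (x - x') := by
    rw [Matrix.mulVec_sub, hx, hx']
    funext j
    have h1 : ((R.mulVec n j : ℤ) : ℚ) = (Rq.mulVec (fun j => (n j : ℚ))) j := by
      rw [hRq_def]; exact RingHom.map_mulVec (Int.castRingHom ℚ) R n j
    have h2 := congrFun hn j
    simp only [Pi.sub_apply] at h2 ⊢
    rw [← h1, ← h2]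
    push_cast
    ring
  have hxx : (fun j => ((n j : ℚ))) = x - x' := hinj hcast
  have hzero : ∀ j, n j = 0 := by
    intro j
    have hj : ((n j : ℚ)) = x j - x' j := by
      have := congrFun hxx j; simpa using this
    have h1 : (n j : ℚ) < 1 := by
      rw [hj]; have := (hx01 j).2; have := (hx'01 j).1; linarith
    have h2 : (-1 : ℚ) < n j := by
      rw [hj]; have := (hx01 j).1; have := (hx'01 j).2; linarith
    have h1' : n j < 1 := by exact_mod_cast h1
    have h2' : -1 < n j := by exact_mod_cast h2
    omega
  have hmm : m - m' = 0 := by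
    rw [hn]
    funext j
    simp [Matrix.mulVec, hzero, dotProduct]
  exact sub_eq_zero.mp hmm
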